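/- Hermite reciprocity: for all nonnegative integers p and q, the p-th symmetric power of the q-th symmetric power of ℂ² is isomorphic as a GL(2,ℂ)-representation (equivalently, has the same character) to the q-th symmetric power of the p-th symmetric power of ℂ². In terms of characters: the complete homogeneous symmetric evaluation h_p(x^q, x^{q-1}y, ..., y^q) equals h_q(x^p, x^{p-1}y, ..., y^p) as polynomials in x, y. -/

import Mathlib

/-- The complete homogeneous symmetric evaluation `h_n(θ_0, …, θ_{k-1})`:
the sum of all monomials of total degree `n` in the values `θ i`. -/
noncomputable def hfull {R : Type*} [CommSemiring R] (k n : ℕ) (θ : Fin k → R) : R :=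
  ∑ f ∈ Finset.Nat.antidiagonalTuple k n, ∏ i, θ i ^ f i


lemma hfull_zero {R : Type*} [CommSemiring R] (k : ℕ) (θ : Fin k → R) :
    hfull k 0 θ = 1 := by
  simp [hfull, Finset.Nat.antidiagonalTuple_zero_right]

lemma hfull_one {R : Type*} [CommSemiring R] (n : ℕ) (θ : Fin 1 → R) :
    hfull 1 n θ = θ 0 ^ n := by
  simp [hfull]

lemma hfull_smul {R : Type*} [CommSemiring R] (k n : ℕ) (c : R) (θ : Fin k → R) :
    hfull k n (fun i => c * θ i) = c ^ n * hfull k n θ := by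
  rw [hfull, hfull, Finset.mul_sum]
  refine Finset.sum_congr rfl fun f hf => ?_
  rw [Finset.Nat.mem_antidiagonalTuple] at hf
  simp_rw [mul_pow, Finset.prod_mul_distrib, Finset.prod_pow_eq_pow_sum, hf]

lemma hfull_peel {R : Type*} [CommSemiring R] (k n : ℕ) (θ : Fin (k + 1) → R) :
    hfull (k + 1) n θ =
      ∑ ab ∈ Finset.HasAntidiagonal.antidiagonal n, θ 0 ^ ab.1 * hfull k ab.2 (fun i => θ i.succ) := by
  simp only [hfull]
  simp_rw [Finset.mul_sum]
  rw [Finset.sum_sigma']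
  refine Finset.sum_nbij'
    (fun g : Fin (k+1) → ℕ => (⟨(g 0, ∑ i : Fin k, g i.succ), Fin.tail g⟩ : Σ _ : ℕ × ℕ, Fin k → ℕ))
    (fun x : Σ _ : ℕ × ℕ, Fin k → ℕ => Fin.cons x.1.1 x.2) ?_ ?_ ?_ ?_ ?_
  · intro g hg
    rw [Finset.Nat.mem_antidiagonalTuple] at hg
    simp only [Finset.mem_sigma, Finset.HasAntidiagonal.mem_antidiagonal, Finset.Nat.mem_antidiagonalTuple]
    exact ⟨by rw [← hg, Fin.sum_univ_succ], rfl⟩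
  · intro x hx
    simp only [Finset.mem_sigma, Finset.HasAntidiagonal.mem_antidiagonal,
      Finset.Nat.mem_antidiagonalTuple] at hx ⊢
    rw [Fin.sum_univ_succ]
    simp [hx.2, hx.1]
  · intro g hg; exact Fin.cons_self_tail g
  · intro x hx
    simp only [Finset.mem_sigma, Finset.HasAntidiagonal.mem_antidiagonal,
      Finset.Nat.mem_antidiagonalTuple] at hx
    refine Sigma.ext ?_ ?_
    · simp [Fin.cons_zero, Fin.cons_succ, hx.2, Prod.ext_iff]
    · simp [Fin.tail_cons]
  · intro g hg
    rw [Fin.prod_univ_succ]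
    simp [Fin.tail]

open MvPolynomial in
noncomputable def Hh (p q : ℕ) : MvPolynomial (Fin 2) ℤ :=
  hfull (q + 1) p (fun i => X 0 ^ (q - (i : ℕ)) * X 1 ^ (i : ℕ))

open MvPolynomial in
lemma Hh_peel (p q : ℕ) :
    Hh p (q + 1) = ∑ ab ∈ Finset.HasAntidiagonal.antidiagonal p,
      X 0 ^ ((q + 1) * ab.1) * (X 1 ^ ab.2 * Hh ab.2 q) := by
  rw [Hh, hfull_peel]
  refine Finset.sum_congr rfl fun ab _ => ?_
  have h1 : (fun i : Fin (q + 1) =>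
      (X 0 : MvPolynomial (Fin 2) ℤ) ^ (q + 1 - ((i.succ : Fin (q + 2)) : ℕ)) *
        X 1 ^ ((i.succ : Fin (q + 2)) : ℕ)) =
      fun i : Fin (q + 1) => X 1 * (X 0 ^ (q - (i : ℕ)) * X 1 ^ (i : ℕ)) := by
    funext i
    rw [Fin.val_succ, Nat.succ_sub_succ, pow_succ]
    ring
  rw [h1, hfull_smul, ← Hh]
  simp only [Fin.val_zero, Nat.sub_zero, pow_zero, mul_one, ← pow_mul]

open MvPolynomial in
lemma Hh_pascalB (p q : ℕ) :
    Hh (p + 1) (q + 1) =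
      X 1 ^ (p + 1) * Hh (p + 1) q + X 0 ^ (q + 1) * Hh p (q + 1) := by
  rw [Hh_peel, Finset.Nat.antidiagonal_succ, Finset.sum_cons, Finset.sum_map, Hh_peel,
    Finset.mul_sum]
  simp only [mul_zero, pow_zero, one_mul]
  congr 1
  refine Finset.sum_congr rfl fun ab _ => ?_
  simp only [Function.Embedding.coe_prodMap, Function.Embedding.coeFn_mk,
    Function.Embedding.refl_apply, Prod.map_fst, Prod.map_snd]
  rw [show (q + 1) * (ab.1 + 1) = (q + 1) + (q + 1) * ab.1 by ring, pow_add]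
  ring

open MvPolynomial in
lemma Hh_swap (p q : ℕ) :
    rename (Equiv.swap (0 : Fin 2) 1) (Hh p q) = Hh p q := by
  unfold Hh hfull
  rw [map_sum]
  refine Finset.sum_nbij' (fun f => f ∘ Fin.rev) (fun f => f ∘ Fin.rev) ?_ ?_ ?_ ?_ ?_
  · intro f hf
    rw [Finset.Nat.mem_antidiagonalTuple] at hf ⊢
    rw [← hf]
    exact Fintype.sum_equiv (Fin.revPerm) _ _ (fun i => rfl)
  · intro f hf
    rw [Finset.Nat.mem_antidiagonalTuple] at hf ⊢
    rw [← hf]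
    exact Fintype.sum_equiv (Fin.revPerm) _ _ (fun i => rfl)
  · intro f _; funext i; simp [Function.comp, Fin.rev_rev]
  · intro f _; funext i; simp [Function.comp, Fin.rev_rev]
  · intro f _
    rw [map_prod]
    refine Fintype.prod_equiv (Fin.revPerm) _ _ (fun i => ?_)
    simp only [map_mul, map_pow, rename_X, Equiv.swap_apply_left, Equiv.swap_apply_right,
      Function.comp, Fin.revPerm_apply]
    rw [Fin.rev_rev, Fin.val_rev]
    have hi : (i : ℕ) ≤ q := Nat.lt_succ_iff.mp i.isLt
    have h2 : q + 1 - ((i : ℕ) + 1) = q - (i : ℕ) := by omega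
    have h3 : q - (q - (i : ℕ)) = (i : ℕ) := by omega
    rw [h2, h3, mul_comm]

open MvPolynomial in
lemma Hh_pascalA (p q : ℕ) :
    Hh (p + 1) (q + 1) =
      X 0 ^ (p + 1) * Hh (p + 1) q + X 1 ^ (q + 1) * Hh p (q + 1) := by
  have h := congrArg (rename (Equiv.swap (0 : Fin 2) 1)) (Hh_pascalB p q)
  rwa [Hh_swap, map_add, map_mul, map_mul, map_pow, map_pow, rename_X, rename_X,
    Equiv.swap_apply_left, Equiv.swap_apply_right, Hh_swap, Hh_swap] at h

lemma Hh_zero_left (q : ℕ) : Hh 0 q = 1 := hfull_zero _ _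

lemma Hh_zero_right (p : ℕ) : Hh p 0 = 1 := by
  rw [Hh, hfull_one]
  simp

lemma Hh_symm (p q : ℕ) : Hh p q = Hh q p := by
  have key : ∀ n p q : ℕ, p + q ≤ n → Hh p q = Hh q p := by
    intro n
    induction n with
    | zero => intro p q h
              obtain ⟨rfl, rfl⟩ : p = 0 ∧ q = 0 := by omega
              rfl
    | succ n ih =>
      intro p q h
      match p, q with
      | 0, q => rw [Hh_zero_left, Hh_zero_right]
      | p, 0 => rw [Hh_zero_left, Hh_zero_right]
      | p + 1, q + 1 =>
        rw [Hh_pascalB p q, Hh_pascalA q p, ih (p + 1) q (by omega), ih p (q + 1) (by omega),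
          add_comm]
  exact key (p + q) p q le_rfl

/-- Hermite reciprocity in character form:
`h_p(x^q, x^{q-1}y, …, y^q) = h_q(x^p, x^{p-1}y, …, y^p)` in `ℤ[x,y]`. -/
theorem hermite_reciprocity (p q : ℕ) :
    hfull (q + 1) p
      (fun i => (MvPolynomial.X 0 : MvPolynomial (Fin 2) ℤ) ^ (q - (i : ℕ)) *
        MvPolynomial.X 1 ^ (i : ℕ)) =
    hfull (p + 1) q
      (fun i => (MvPolynomial.X 0 : MvPolynomial (Fin 2) ℤ) ^ (p - (i : ℕ)) *
        MvPolynomial.X 1 ^ (i : ℕ)) := by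
  exact Hh_symm p q
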